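/- Let G be a finite simple graph, let k ≥ 1 be a natural number, and let M be a maximal matching of G such that G contains no M-augmenting path of length at most 2k−1. Then for every matching M′ of G one has k·|M′| ≤ (k+1)·|M|; in other words, M has size at least a k/(k+1) fraction of the maximum cardinality matching of G. -/

import Mathlib

/-- `M` is a matching of `G`: a set of edges of `G`, no two of which share a vertex. -/
def IsMatching {V : Type*} (G : SimpleGraph V) (M : Set (Sym2 V)) : Prop :=
  M ⊆ G.edgeSet ∧ ∀ e ∈ M, ∀ f ∈ M, e ≠ f → ∀ v : V, v ∈ e → v ∉ f

/-- A vertex is matched by `M` if it lies on some edge of `M`. -/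
def MatchedBy {V : Type*} (M : Set (Sym2 V)) (v : V) : Prop := ∃ e ∈ M, v ∈ e

/-- `p 0, p 1, …, p ℓ` is an `M`-augmenting path of length `ℓ` in `G`:
distinct vertices, consecutive vertices adjacent, edges alternate (the `i`-th edge is in `M`
iff `i` is odd, so the path starts and ends with non-matching edges), and both
endpoints are free (unmatched). -/
def IsAugmentingPath {V : Type*} (G : SimpleGraph V) (M : Set (Sym2 V)) (ℓ : ℕ)
    (p : ℕ → V) : Prop :=
  0 < ℓ ∧
  (∀ i j, i ≤ ℓ → j ≤ ℓ → p i = p j → i = j) ∧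
  (∀ i, i < ℓ → G.Adj (p i) (p (i + 1))) ∧
  (∀ i, i < ℓ → (s(p i, p (i + 1)) ∈ M ↔ i % 2 = 1)) ∧
  ¬ MatchedBy M (p 0) ∧ ¬ MatchedBy M (p ℓ)

open Classical in
noncomputable def ppart {V : Type*} (N : Set (Sym2 V)) (v : V) : Option V :=
  if h : ∃ w, s(v, w) ∈ N then some h.choose else none

section PP
variable {V : Type*} {G : SimpleGraph V} {N : Set (Sym2 V)} (hN : IsMatching G N)

lemma ppart_mem {v w : V} (h : ppart N v = some w) : s(v, w) ∈ N := by
  classical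
  unfold ppart at h
  split at h
  · rename_i he
    obtain rfl : he.choose = w := by injection h
    exact he.choose_spec
  · simp at h

include hN

lemma ppart_ne {v w : V} (h : ppart N v = some w) : v ≠ w := by
  have := hN.1 (ppart_mem h)
  rw [SimpleGraph.mem_edgeSet] at this
  exact this.ne

lemma ppart_eq_some {v w : V} (h : s(v, w) ∈ N) : ppart N v = some w := by
  classical
  have hex : ∃ w, s(v, w) ∈ N := ⟨w, h⟩
  have hc := hex.choose_spec
  have hvw : v ≠ w := by
    have := hN.1 h; rw [SimpleGraph.mem_edgeSet] at this; exact this.ne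
  have heq : s(v, hex.choose) = s(v, w) := by
    by_contra hne
    exact hN.2 _ hc _ h hne v (by simp) (by simp)
  rw [Sym2.eq_iff] at heq
  unfold ppart
  rw [dif_pos hex]
  rcases heq with ⟨-, rfl⟩ | ⟨h1, h2⟩
  · rfl
  · exact absurd h1 hvw

lemma ppart_symm {v w : V} (h : ppart N v = some w) : ppart N w = some v :=
  ppart_eq_some hN (by rw [Sym2.eq_swap]; exact ppart_mem h)

omit hN

lemma ppart_none_iff {v : V} : ppart N v = none ↔ ¬ MatchedBy N v := by
  classical
  have : MatchedBy N v ↔ ∃ w, s(v, w) ∈ N := by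
    constructor
    · rintro ⟨e, he, hv⟩
      obtain ⟨w, rfl⟩ := Sym2.mem_iff_exists.mp hv
      exact ⟨w, he⟩
    · rintro ⟨w, hw⟩; exact ⟨_, hw, by simp⟩
  rw [this]
  unfold ppart
  split
  · rename_i h; simp [h]
  · rename_i h; simp [h]

end PP

noncomputable def walkW {V : Type*} (M M' : Set (Sym2 V)) (v : V) : ℕ → Option V
  | 0 => some v
  | n + 1 => (walkW M M' v n).bind (fun u => if n % 2 = 0 then ppart M' u else ppart M u)

section Walk
variable {V : Type*} {G : SimpleGraph V} {M M' : Set (Sym2 V)}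
  (hM : IsMatching G M) (hM' : IsMatching G M')

lemma walkW_succ (v : V) (n : ℕ) :
    walkW M M' v (n+1) = (walkW M M' v n).bind
      (fun u => if n % 2 = 0 then ppart M' u else ppart M u) := rfl

lemma walkW_succ_some {v u : V} {n : ℕ} (hn : walkW M M' v n = some u) :
    walkW M M' v (n+1) = (if n % 2 = 0 then ppart M' u else ppart M u) := by
  rw [walkW_succ, hn]; rfl

lemma walkW_none_succ {v : V} {n : ℕ} (hn : walkW M M' v n = none) :
    walkW M M' v (n+1) = none := by rw [walkW_succ, hn]; rfl

lemma walkW_some_of_le {v : V} {m n : ℕ} (hmn : m ≤ n) (hn : (walkW M M' v n).isSome) :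
    (walkW M M' v m).isSome := by
  by_contra h
  have hm : walkW M M' v m = none := by
    cases hw : walkW M M' v m
    · rfl
    · rw [hw] at h; simp at h
  have : ∀ j, walkW M M' v (m + j) = none := by
    intro j
    induction j with
    | zero => simpa using hm
    | succ j ih => exact walkW_none_succ ih
  have := this (n - m)
  rw [Nat.add_sub_cancel' hmn] at this
  rw [this] at hn; simp at hn

include hM hM'

lemma walkW_back {v w : V} {n : ℕ} (h : walkW M M' v (n+1) = some w) :
    walkW M M' v n = (if n % 2 = 0 then ppart M' w else ppart M w) := by
  rw [walkW_succ] at h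
  rw [Option.bind_eq_some_iff] at h
  obtain ⟨u, hu, hstep⟩ := h
  rw [hu]
  by_cases hn : n % 2 = 0
  · rw [if_pos hn] at hstep ⊢
    exact (ppart_symm hM' hstep).symm
  · rw [if_neg hn] at hstep ⊢
    exact (ppart_symm hM hstep).symm

lemma walkW_inj {v : V} (hv : ppart M v = none) :
    ∀ j i, i < j → ∀ u, walkW M M' v i = some u → walkW M M' v j ≠ some u := by
  intro j
  induction j using Nat.strong_induction_on with
  | _ j IH =>
    intro i hij u hi hj
    have hjsome : ∀ m ≤ j, (walkW M M' v m).isSome := fun m hm =>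
      walkW_some_of_le hm (by rw [hj]; rfl)
    by_cases hpar : i % 2 = j % 2
    · -- same parity
      rcases Nat.eq_zero_or_pos i with rfl | hi0
      · -- i = 0, u = v
        obtain rfl : v = u := by simpa [walkW] using hi
        have hj2 : 2 ≤ j := by omega
        obtain ⟨j', rfl⟩ : ∃ j', j = j' + 1 := ⟨j - 1, by omega⟩
        have hb := walkW_back hM hM' hj
        rw [if_neg (by omega : ¬ j' % 2 = 0)] at hb
        rw [hv] at hb
        have := hjsome j' (by omega)
        rw [hb] at this; simp at this
      · obtain ⟨i', rfl⟩ : ∃ i', i = i' + 1 := ⟨i - 1, by omega⟩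
        obtain ⟨j', rfl⟩ : ∃ j', j = j' + 1 := ⟨j - 1, by omega⟩
        have hbi := walkW_back hM hM' hi
        have hbj := walkW_back hM hM' hj
        have hpar' : i' % 2 = j' % 2 := by omega
        rw [hpar'] at hbi
        rw [← hbj] at hbi
        obtain ⟨x, hx⟩ := Option.isSome_iff_exists.mp (hjsome i' (by omega))
        exact IH j' (by omega) i' (by omega) x hx (hbi.symm.trans hx)
    · -- different parity
      rcases Nat.lt_or_ge (i+1) j with hlt | hge
      · have hj3 : i + 3 ≤ j := by omega
        obtain ⟨j', rfl⟩ : ∃ j', j = j' + 1 := ⟨j - 1, by omega⟩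
        have hbj := walkW_back hM hM' hj
        have hfi : walkW M M' v (i+1) =
            (if i % 2 = 0 then ppart M' u else ppart M u) := walkW_succ_some hi
        have hpar' : i % 2 = j' % 2 := by omega
        rw [hpar'] at hfi
        rw [← hbj] at hfi
        obtain ⟨x, hx⟩ := Option.isSome_iff_exists.mp (hjsome (i+1) (by omega))
        exact IH j' (by omega) (i+1) (by omega) x hx (hfi ▸ hx)
      · -- j = i + 1
        obtain rfl : j = i + 1 := by omega
        have hfi := walkW_succ_some (v := v) (M := M) (M' := M') (n := i) hi
        rw [hj] at hfi
        by_cases hp : i % 2 = 0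
        · rw [if_pos hp] at hfi
          exact ppart_ne hM' hfi.symm rfl
        · rw [if_neg hp] at hfi
          exact ppart_ne hM hfi.symm rfl

lemma walkW_inj' {v : V} (hv : ppart M v = none) {i j : ℕ} {u : V}
    (hi : walkW M M' v i = some u) (hj : walkW M M' v j = some u) : i = j := by
  rcases lt_trichotomy i j with h | h | h
  · exact absurd hj (walkW_inj hM hM' hv j i h u hi)
  · exact h
  · exact absurd hi (walkW_inj hM hM' hv i j h u hj)

end Walk

section Walk2
variable {V : Type*} [Fintype V] {G : SimpleGraph V} {M M' : Set (Sym2 V)}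
  (hM : IsMatching G M) (hM' : IsMatching G M')

include hM hM' in
lemma walkW_exists_none {v : V} (hv : ppart M v = none) :
    ∃ n, walkW M M' v n = none := by
  by_contra hall
  push_neg at hall
  have hsome : ∀ n, (walkW M M' v n).isSome := fun n =>
    Option.isSome_iff_ne_none.mpr (hall n)
  set f : Fin (Fintype.card V + 1) → V := fun n => (walkW M M' v n).get (hsome n) with hf
  have hfinj : Function.Injective f := by
    intro a b hab
    have ha : walkW M M' v a = some (f a) := by simp [hf]
    have hb : walkW M M' v b = some (f b) := by simp [hf]
    rw [hab] at ha
    exact Fin.ext (walkW_inj' hM hM' hv ha hb)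
  have := Fintype.card_le_of_injective f hfinj
  simp at this

open Classical in
noncomputable def wlen (M M' : Set (Sym2 V)) (v : V) : ℕ :=
  if h : ∃ n, walkW M M' v n = none then Nat.find h - 1 else 0

include hM hM'

lemma wlen_none {v : V} (hv : ppart M v = none) :
    walkW M M' v (wlen M M' v + 1) = none := by
  classical
  have h := walkW_exists_none hM hM' hv
  rw [wlen, dif_pos h]
  have h1 : 1 ≤ Nat.find h := by
    rcases Nat.eq_zero_or_pos (Nat.find h) with h0 | h0
    · have := Nat.find_spec h
      rw [h0] at this
      simp [walkW] at this
    · exact h0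
  have : Nat.find h - 1 + 1 = Nat.find h := by omega
  rw [this]
  exact Nat.find_spec h

lemma wlen_isSome {v : V} (hv : ppart M v = none) :
    (walkW M M' v (wlen M M' v)).isSome := by
  classical
  have h := walkW_exists_none hM hM' hv
  rw [wlen, dif_pos h]
  have := Nat.find_min h (m := Nat.find h - 1)
  rcases Nat.eq_zero_or_pos (Nat.find h) with h0 | h0
  · simp [h0, walkW]
  · have hne := this (by omega)
    exact Option.isSome_iff_ne_none.mpr hne

lemma walkW_none_of_ge {v : V} {m : ℕ} (hv : ppart M v = none)
    (hm : wlen M M' v + 1 ≤ m) : walkW M M' v m = none := by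
  obtain ⟨t, rfl⟩ : ∃ t, m = (wlen M M' v + 1) + t := ⟨m - (wlen M M' v + 1), by omega⟩
  induction t with
  | zero => exact wlen_none hM hM' hv
  | succ t ih => exact walkW_none_succ (ih (by omega))

lemma wlen_ge {v : V} {n : ℕ} (hv : ppart M v = none)
    (hn : (walkW M M' v n).isSome) : n ≤ wlen M M' v := by
  by_contra hgt
  rw [walkW_none_of_ge hM hM' hv (by omega)] at hn
  simp at hn

lemma wlen_eq {v : V} {n : ℕ} (hv : ppart M v = none)
    (hsome : (walkW M M' v n).isSome) (hnone : walkW M M' v (n+1) = none) :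
    wlen M M' v = n := by
  have h1 := wlen_ge hM hM' hv hsome
  have h2 : wlen M M' v ≤ n := by
    by_contra hgt
    have : (walkW M M' v (n+1)).isSome :=
      walkW_some_of_le (by omega) (wlen_isSome hM hM' hv)
    rw [hnone] at this; simp at this
  omega

lemma wlen_pos {v : V} (hv : ppart M v = none) (hv' : ppart M' v ≠ none) :
    1 ≤ wlen M M' v := by
  apply wlen_ge hM hM' hv
  have h1 : walkW M M' v 1 = ppart M' v := by
    have := walkW_succ_some (M := M) (M' := M') (n := 0) (u := v) (v := v) rfl
    simpa using this
  rw [h1]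
  exact Option.isSome_iff_ne_none.mpr hv'

lemma share_a {v w : V} (hv : ppart M v = none) (hw : ppart M w = none) :
    ∀ i j u, walkW M M' v i = some u → walkW M M' w j = some u →
      i % 2 = j % 2 → v = w ∧ i = j := by
  intro i
  induction i using Nat.strong_induction_on with
  | _ i IH =>
    intro j u hi hj hpar
    rcases Nat.eq_zero_or_pos i with rfl | hi0
    · obtain rfl : v = u := by simpa [walkW] using hi
      rcases Nat.eq_zero_or_pos j with rfl | hj0
      · obtain rfl : w = v := by simpa [walkW] using hj
        exact ⟨rfl, rfl⟩
      · exfalso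
        obtain ⟨j', rfl⟩ : ∃ j', j = j' + 1 := ⟨j - 1, by omega⟩
        have hbj := walkW_back hM hM' hj
        rw [if_neg (by omega : ¬ j' % 2 = 0), hv] at hbj
        have hcon := walkW_none_succ (M := M) (M' := M') (v := w) hbj
        rw [hj] at hcon; simp at hcon
    · rcases Nat.eq_zero_or_pos j with rfl | hj0
      · exfalso
        obtain rfl : w = u := by simpa [walkW] using hj
        obtain ⟨i', rfl⟩ : ∃ i', i = i' + 1 := ⟨i - 1, by omega⟩
        have hbi := walkW_back hM hM' hi
        rw [if_neg (by omega : ¬ i' % 2 = 0), hw] at hbi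
        have hcon := walkW_none_succ (M := M) (M' := M') (v := v) hbi
        rw [hi] at hcon; simp at hcon
      · obtain ⟨i', rfl⟩ : ∃ i', i = i' + 1 := ⟨i - 1, by omega⟩
        obtain ⟨j', rfl⟩ : ∃ j', j = j' + 1 := ⟨j - 1, by omega⟩
        have hbi := walkW_back hM hM' hi
        have hbj := walkW_back hM hM' hj
        have hpar' : i' % 2 = j' % 2 := by omega
        rw [hpar'] at hbi
        rw [← hbj] at hbi
        obtain ⟨x, hx⟩ := Option.isSome_iff_exists.mp
          (walkW_some_of_le (Nat.le_succ i') (by rw [hi]; rfl))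
        obtain ⟨h1, h2⟩ := IH i' (by omega) j' x hx (hbi.symm.trans hx) (by omega)
        exact ⟨h1, by omega⟩

lemma share_b {v w : V} (hv : ppart M v = none) (hw : ppart M w = none)
    {i j : ℕ} {u : V} (hi : walkW M M' v i = some u) (hj : walkW M M' w j = some u)
    (hpar : i % 2 ≠ j % 2) :
    ∀ t, t ≤ i → walkW M M' w (j + t) = walkW M M' v (i - t) := by
  intro t
  induction t with
  | zero => intro _; simp [hj, hi]
  | succ t ih =>
    intro ht
    have hprev := ih (by omega)
    obtain ⟨x, hx⟩ := Option.isSome_iff_exists.mp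
      (walkW_some_of_le (by omega : i - t ≤ i) (by rw [hi]; rfl))
    have hwx : walkW M M' w (j + t) = some x := hprev.trans hx
    obtain ⟨it', hit'⟩ : ∃ it', i - t = it' + 1 := ⟨i - t - 1, by omega⟩
    have hbx : walkW M M' v it' = (if it' % 2 = 0 then ppart M' x else ppart M x) := by
      apply walkW_back hM hM'
      rw [← hit']; exact hx
    have hfw : walkW M M' w (j + t + 1) =
        (if (j + t) % 2 = 0 then ppart M' x else ppart M x) := walkW_succ_some hwx
    have hpareq : (j + t) % 2 = it' % 2 := by omega
    rw [hpareq] at hfw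
    have : i - (t + 1) = it' := by omega
    rw [this, hbx, ← hfw]
    rfl

lemma share_b_end {v w : V} (hv : ppart M v = none) (hw : ppart M w = none)
    {i j : ℕ} {u : V} (hi : walkW M M' v i = some u) (hj : walkW M M' w j = some u)
    (hpar : i % 2 ≠ j % 2) :
    walkW M M' w (j + i) = some v ∧ wlen M M' w = j + i := by
  have h1 : walkW M M' w (j + i) = some v := by
    have := share_b hM hM' hv hw hi hj hpar i le_rfl
    simpa [walkW] using this
  refine ⟨h1, wlen_eq hM hM' hw (by rw [h1]; rfl) ?_⟩
  have := walkW_succ_some (M := M) (M' := M') h1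
  rw [if_neg (by omega : ¬ (j + i) % 2 = 0), hv] at this
  exact this

end Walk2

noncomputable def wval {V : Type*} (M M' : Set (Sym2 V)) (v : V) (n : ℕ) : V :=
  (walkW M M' v n).getD v

section Walk3
variable {V : Type*} [Fintype V] {G : SimpleGraph V} {M M' : Set (Sym2 V)}
  (hM : IsMatching G M) (hM' : IsMatching G M')

include hM hM'

lemma wval_some {v : V} {n : ℕ} (hv : ppart M v = none) (hn : n ≤ wlen M M' v) :
    walkW M M' v n = some (wval M M' v n) := by
  obtain ⟨x, hx⟩ := Option.isSome_iff_exists.mp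
    (walkW_some_of_le hn (wlen_isSome hM hM' hv))
  rw [wval, hx]; rfl

lemma walk_edge_M {v : V} {n : ℕ} (hv : ppart M v = none)
    (hn : n < wlen M M' v) (hpar : n % 2 = 1) :
    s(wval M M' v n, wval M M' v (n+1)) ∈ M := by
  have ha := wval_some hM hM' hv (le_of_lt hn)
  have hb := wval_some hM hM' hv (by omega : n + 1 ≤ wlen M M' v)
  have hstep := walkW_succ_some (M := M) (M' := M') ha
  rw [hb, if_neg (by omega : ¬ n % 2 = 0)] at hstep
  exact ppart_mem hstep.symm

lemma walk_edge_M' {v : V} {n : ℕ} (hv : ppart M v = none)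
    (hn : n < wlen M M' v) (hpar : n % 2 = 0) :
    s(wval M M' v n, wval M M' v (n+1)) ∈ M' ∧
      s(wval M M' v n, wval M M' v (n+1)) ∉ M := by
  have ha := wval_some hM hM' hv (le_of_lt hn)
  have hb := wval_some hM hM' hv (by omega : n + 1 ≤ wlen M M' v)
  have hstep := walkW_succ_some (M := M) (M' := M') ha
  rw [hb, if_pos hpar] at hstep
  refine ⟨ppart_mem hstep.symm, fun hmem => ?_⟩
  have hback : ppart M (wval M M' v (n+1)) = some (wval M M' v n) :=
    ppart_eq_some hM (by rwa [Sym2.eq_swap])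
  have h2 : walkW M M' v (n+2) = some (wval M M' v n) := by
    have := walkW_succ_some (M := M) (M' := M') hb
    rw [if_neg (by omega : ¬ (n+1) % 2 = 0), hback] at this
    exact this
  have := walkW_inj' hM hM' hv ha h2
  omega

lemma walk_aug {v : V} (hv : ppart M v = none) (hv' : ppart M' v ≠ none)
    (hodd : wlen M M' v % 2 = 1) :
    IsAugmentingPath G M (wlen M M' v) (wval M M' v) := by
  set L := wlen M M' v with hL
  refine ⟨by omega, ?_, ?_, ?_, ?_, ?_⟩
  · intro i j hi hj hij
    exact walkW_inj' hM hM' hv (wval_some hM hM' hv hi)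
      (hij ▸ wval_some hM hM' hv hj)
  · intro i hi
    rw [← SimpleGraph.mem_edgeSet]
    rcases Nat.even_or_odd i with he | ho
    · exact hM'.1 (walk_edge_M' hM hM' hv hi (Nat.even_iff.mp he)).1
    · exact hM.1 (walk_edge_M hM hM' hv hi (Nat.odd_iff.mp ho))
  · intro i hi
    constructor
    · intro hmem
      by_contra hpar
      exact (walk_edge_M' hM hM' hv hi (by omega)).2 hmem
    · intro hpar
      exact walk_edge_M hM hM' hv hi hpar
  · have h0 : wval M M' v 0 = v := by simp [wval, walkW]
    rw [h0, ← ppart_none_iff]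
    exact hv
  · rw [← ppart_none_iff]
    have he := wval_some hM hM' hv (le_refl L)
    have hnone := wlen_none hM hM' hv
    have := walkW_succ_some (M := M) (M' := M') he
    rw [if_neg (by omega : ¬ L % 2 = 0)] at this
    rw [← this]
    exact hnone

end Walk3

section Count
variable {V : Type*} [Fintype V] {G : SimpleGraph V}

lemma matched_count {N : Set (Sym2 V)} (hN : IsMatching G N) :
    {v | MatchedBy N v}.ncard = 2 * N.ncard := by
  classical
  have hfin : N.Finite := Set.toFinite N
  revert hN
  refine Set.Finite.induction_on (motive := fun N _ => IsMatching G N → {v | MatchedBy N v}.ncard = 2 * N.ncard) N hfin ?_ ?_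
  · intro _
    have : {v | MatchedBy (∅ : Set (Sym2 V)) v} = ∅ := by
      ext x; simp [MatchedBy]
    simp [this]
  · intro e s hes hsfin ih hN
    have hs : IsMatching G s := by
      refine ⟨fun x hx => hN.1 (Set.mem_insert_of_mem _ hx), ?_⟩
      intro a ha b hb hab x hxa
      exact hN.2 a (Set.mem_insert_of_mem _ ha) b (Set.mem_insert_of_mem _ hb) hab x hxa
    induction e using Sym2.ind with
    | _ a b =>
      have hab : a ≠ b := by
        have := hN.1 (Set.mem_insert _ _)
        rw [SimpleGraph.mem_edgeSet] at this
        exact this.ne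
      have hsplit : {v | MatchedBy (insert s(a,b) s) v}
          = ({a, b} : Set V) ∪ {v | MatchedBy s v} := by
        ext x
        simp only [Set.mem_setOf_eq, MatchedBy, Set.mem_insert_iff, Set.mem_union]
        constructor
        · rintro ⟨f, (rfl | hf), hx⟩
          · left; simpa using hx
          · right; exact ⟨f, hf, hx⟩
        · rintro (hx | ⟨f, hf, hx⟩)
          · exact ⟨s(a,b), Or.inl rfl, by rcases hx with rfl | rfl <;> simp⟩
          · exact ⟨f, Or.inr hf, hx⟩
      have hdisj : Disjoint ({a, b} : Set V) {v | MatchedBy s v} := by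
        rw [Set.disjoint_left]
        rintro x hx ⟨f, hf, hxf⟩
        have hne : s(a,b) ≠ f := by
          rintro rfl; exact hes hf
        refine hN.2 s(a,b) (Set.mem_insert _ _) f (Set.mem_insert_of_mem _ hf) hne x ?_ hxf
        rcases hx with rfl | rfl <;> simp
      rw [hsplit, Set.ncard_union_eq hdisj (Set.toFinite _) (Set.toFinite _),
        Set.ncard_pair hab, ih hs, Set.ncard_insert_of_notMem hes hsfin]
      ring

end Count



/-- If `M` is a maximal matching of a finite simple graph `G` admitting no augmenting
path of length at most `2k - 1` (`k ≥ 1`), then for every matching `M'` of `G` we have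
`k·|M'| ≤ (k+1)·|M|`. -/
theorem maximal_matching_no_short_aug_path_approx
    {V : Type*} [Fintype V] (G : SimpleGraph V) (k : ℕ) (hk : 1 ≤ k)
    (M : Set (Sym2 V)) (hM : IsMatching G M)
    (hmax : ∀ N, IsMatching G N → M ⊆ N → N = M)
    (hnoaug : ∀ ℓ, ℓ ≤ 2 * k - 1 → ∀ p : ℕ → V, ¬ IsAugmentingPath G M ℓ p)
    (M' : Set (Sym2 V)) (hM' : IsMatching G M') :
    k * M'.ncard ≤ (k + 1) * M.ncard := by
  classical
  set S : Set V := {x | ¬ MatchedBy M x ∧ MatchedBy M' x} with hSdef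
  set T : Set V := {x | MatchedBy M x ∧ ¬ MatchedBy M' x} with hTdef
  set X : Set V := {x | MatchedBy M x ∧ MatchedBy M' x} with hXdef
  have hsM' : {x | MatchedBy M' x} = S ∪ X := by
    ext x
    simp only [hSdef, hXdef, Set.mem_union, Set.mem_setOf_eq]
    tauto
  have hsM : {x | MatchedBy M x} = T ∪ X := by
    ext x
    simp only [hTdef, hXdef, Set.mem_union, Set.mem_setOf_eq]
    tauto
  have hd1 : Disjoint S X := by
    rw [Set.disjoint_left]; rintro x ⟨h1, _⟩ ⟨h2, _⟩; exact h1 h2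
  have hd2 : Disjoint T X := by
    rw [Set.disjoint_left]; rintro x ⟨_, h1⟩ ⟨_, h2⟩; exact h1 h2
  have h1 : S.ncard + X.ncard = 2 * M'.ncard := by
    rw [← Set.ncard_union_eq hd1 (Set.toFinite _) (Set.toFinite _), ← hsM',
      matched_count hM']
  have h2 : T.ncard + X.ncard = 2 * M.ncard := by
    rw [← Set.ncard_union_eq hd2 (Set.toFinite _) (Set.toFinite _), ← hsM,
      matched_count hM]
  -- unmatched ppart facts
  have hppM : ∀ x ∈ S, ppart M x = none := fun x hx => ppart_none_iff.mpr hx.1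
  have hppM' : ∀ x ∈ S, ppart M' x ≠ none := fun x hx hn =>
    (ppart_none_iff.mp hn) hx.2
  set A : Set V := {x | x ∈ S ∧ wlen M M' x % 2 = 1} with hAdef
  set B : Set V := {x | x ∈ S ∧ wlen M M' x % 2 = 0} with hBdef
  have h3 : S.ncard = A.ncard + B.ncard := by
    have hsplit : S = A ∪ B := by
      ext x
      simp only [hAdef, hBdef, Set.mem_union, Set.mem_setOf_eq]
      have := Nat.mod_two_eq_zero_or_one (wlen M M' x)
      tauto
    have hdisj : Disjoint A B := by
      rw [Set.disjoint_left]
      rintro x ⟨_, hx1⟩ ⟨_, hx2⟩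
      omega
    rw [hsplit, Set.ncard_union_eq hdisj (Set.toFinite _) (Set.toFinite _)]
  -- h4 : B ↪ T
  have h4 : B.ncard ≤ T.ncard := by
    apply Set.ncard_le_ncard_of_injOn (fun x => wval M M' x (wlen M M' x))
    · intro x hx
      obtain ⟨hxS, hxpar⟩ := hx
      have hpx := hppM x hxS
      have hL1 : 1 ≤ wlen M M' x := wlen_pos hM hM' hpx (hppM' x hxS)
      have hL2 : 2 ≤ wlen M M' x := by omega
      set L := wlen M M' x with hLdef
      have he : walkW M M' x L = some (wval M M' x L) := wval_some hM hM' hpx le_rfl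
      show MatchedBy M (wval M M' x L) ∧ ¬ MatchedBy M' (wval M M' x L)
      constructor
      · -- MatchedBy M (endpoint)
        obtain ⟨L', hL'⟩ : ∃ L', L = L' + 1 := ⟨L - 1, by omega⟩
        have hb := walkW_back hM hM' (hL' ▸ he)
        rw [if_neg (by omega : ¬ L' % 2 = 0)] at hb
        have hsome : (walkW M M' x L').isSome :=
          walkW_some_of_le (m := L') (n := L) (by omega) (by rw [he]; rfl)
        rw [hb] at hsome
        rw [← hL'] at hsome
        by_contra hcon
        rw [ppart_none_iff.mpr hcon] at hsome
        simp at hsome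
      · -- ¬ MatchedBy M' (endpoint)
        rw [← ppart_none_iff]
        have hnone := wlen_none hM hM' hpx
        have hstep := walkW_succ_some (M := M) (M' := M') he
        rw [if_pos (by omega : L % 2 = 0)] at hstep
        rw [← hstep]
        exact hnone
    · intro x hx y hy hxy
      have hxy' : wval M M' x (wlen M M' x) = wval M M' y (wlen M M' y) := hxy
      have hex : walkW M M' x (wlen M M' x) = some (wval M M' y (wlen M M' y)) := by
        rw [← hxy']
        exact wval_some hM hM' (hppM x hx.1) le_rfl
      have hey : walkW M M' y (wlen M M' y) = some (wval M M' y (wlen M M' y)) :=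
        wval_some hM hM' (hppM y hy.1) le_rfl
      have hx2 := hx.2
      have hy2 := hy.2
      exact (share_a hM hM' (hppM x hx.1) (hppM y hy.1) _ _ _ hex hey
        (by omega)).1
  -- h5 : k * |A| ≤ 2 * |M|
  have hlenA : ∀ x ∈ A, 2 * k + 1 ≤ wlen M M' x := by
    intro x hx
    obtain ⟨hxS, hxpar⟩ := hx
    by_contra hcon
    push_neg at hcon
    have haug := walk_aug hM hM' (hppM x hxS) (hppM' x hxS) hxpar
    exact hnoaug (wlen M M' x) (by omega) _ haug
  have h5 : A.ncard * k ≤ 2 * M.ncard := by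
    have hAfin : A.Finite := Set.toFinite _
    have hMfin : M.Finite := Set.toFinite _
    set f : V × ℕ → Sym2 V :=
      fun q => s(wval M M' q.1 (2*q.2+1), wval M M' q.1 (2*q.2+2)) with hfdef
    set sF : Finset (V × ℕ) := hAfin.toFinset ×ˢ Finset.range k with hsFdef
    have hmemA : ∀ q : V × ℕ, q ∈ sF ↔ q.1 ∈ A ∧ q.2 < k := by
      intro q
      rw [hsFdef, Finset.mem_product, Set.Finite.mem_toFinset, Finset.mem_range]
    have hmaps : ∀ q ∈ sF, f q ∈ hMfin.toFinset := by
      intro q hq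
      obtain ⟨hqA, hqk⟩ := (hmemA q).mp hq
      rw [Set.Finite.mem_toFinset]
      have hlen := hlenA q.1 hqA
      exact walk_edge_M hM hM' (hppM q.1 hqA.1) (by omega) (by omega)
    have hfib : ∀ e ∈ hMfin.toFinset, (sF.filter (fun q => f q = e)).card ≤ 2 := by
      intro e he
      rcases Finset.eq_empty_or_nonempty (sF.filter (fun q => f q = e)) with h0 | h0
      · simp [h0]
      · obtain ⟨⟨x, a⟩, hxa⟩ := h0
        rw [Finset.mem_filter] at hxa
        obtain ⟨hxa1, hxa2⟩ := hxa
        obtain ⟨hxA, hak⟩ := (hmemA _).mp hxa1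
        have hpx := hppM x hxA.1
        have hlx := hlenA x hxA
        have hsub : sF.filter (fun q => f q = e) ⊆
            {(x, a), (wval M M' x (wlen M M' x), (wlen M M' x - 2*a - 3)/2)} := by
          rintro ⟨y, b⟩ hyb
          rw [Finset.mem_filter] at hyb
          obtain ⟨hyb1, hyb2⟩ := hyb
          obtain ⟨hyA, hbk⟩ := (hmemA _).mp hyb1
          have hpy := hppM y hyA.1
          have hly := hlenA y hyA
          have hfeq : f (y, b) = f (x, a) := hyb2.trans hxa2.symm
          rw [hfdef] at hfeq
          simp only [Sym2.eq_iff] at hfeq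
          have hy1 : walkW M M' y (2*b+1) = some (wval M M' y (2*b+1)) :=
            wval_some hM hM' hpy (by omega)
          have hy2 : walkW M M' y (2*b+2) = some (wval M M' y (2*b+2)) :=
            wval_some hM hM' hpy (by omega)
          have hx1 : walkW M M' x (2*a+1) = some (wval M M' x (2*a+1)) :=
            wval_some hM hM' hpx (by omega)
          have hx2 : walkW M M' x (2*a+2) = some (wval M M' x (2*a+2)) :=
            wval_some hM hM' hpx (by omega)
          rcases hfeq with ⟨hA1, hA2⟩ | ⟨hA1, hA2⟩
          · -- same orientation
            rw [hA1] at hy1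
            have := share_a hM hM' hpy hpx _ _ _ hy1 hx1 (by omega)
            obtain ⟨rfl, hab⟩ := this
            have : b = a := by omega
            subst this
            exact Finset.mem_insert_self _ _
          · -- reversed orientation
            rw [hA1] at hy1
            have hend := share_b_end hM hM' hpy hpx hy1 hx2 (by omega)
            obtain ⟨hwx, hwlen⟩ := hend
            have hex : walkW M M' x (wlen M M' x) = some (wval M M' x (wlen M M' x)) :=
              wval_some hM hM' hpx le_rfl
            rw [← hwlen] at hwx
            have hy : y = wval M M' x (wlen M M' x) :=
              Option.some.inj (hwx.symm.trans hex)
            have hb : b = (wlen M M' x - 2*a - 3)/2 := by omega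
            rw [Finset.mem_insert, Finset.mem_singleton]
            right
            rw [Prod.ext_iff]
            exact ⟨hy, hb⟩
        calc (sF.filter (fun q => f q = e)).card
            ≤ _ := Finset.card_le_card hsub
          _ ≤ 2 := by
              apply (Finset.card_insert_le _ _).trans
              simp
    have hcard := Finset.card_le_mul_card_image_of_maps_to hmaps 2 hfib
    rw [hsFdef, Finset.card_product, Finset.card_range] at hcard
    rw [Set.ncard_eq_toFinset_card A hAfin, Set.ncard_eq_toFinset_card M hMfin]
    exact hcard
  -- final arithmetic
  nlinarith [h1, h2, h3, h4, h5, Nat.mul_le_mul_left k h4,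
    Nat.mul_le_mul_left k h1.le, mul_le_mul_right h4 k]
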